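/- Faà di Bruno's formula for the exponential: if g is m-times differentiable at s, then the m-th derivative of exp(g(s)) equals exp(g(s)) times the sum over all m-tuples (b_1,...,b_m) of non-negative integers with b_1 + 2·b_2 + ... + m·b_m = m of the term (m!/(b_1!···b_m!)) · ∏_{j=1}^m (g^{(j)}(s)/j!)^{b_j}. -/

import Mathlib

open Nat

section FaaDiBrunoExpAux

open Nat Finset Filter Topology Set

private lemma iterDeriv_of_open {n : ℕ} {f : ℝ → ℝ} {U : Set ℝ} (hU : IsOpen U) {t : ℝ}
    (ht : t ∈ U) : iteratedDerivWithin n f U t = iteratedDeriv n f t := by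
  simp only [iteratedDerivWithin, iteratedDeriv, iteratedFDerivWithin_of_isOpen n hU ht]

private lemma iterDeriv_add {n : ℕ} {f g : ℝ → ℝ} {U : Set ℝ} (hU : IsOpen U) {t : ℝ}
    (ht : t ∈ U) (hf : ContDiffOn ℝ n f U) (hg : ContDiffOn ℝ n g U) :
    iteratedDeriv n (fun x => f x + g x) t = iteratedDeriv n f t + iteratedDeriv n g t := by
  rw [← iterDeriv_of_open hU ht, ← iterDeriv_of_open hU ht, ← iterDeriv_of_open hU ht]
  exact iteratedDerivWithin_add ht hU.uniqueDiffOn (hf.contDiffWithinAt ht) (hg.contDiffWithinAt ht)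

private lemma pascal_sum (a b : ℕ → ℝ) (n : ℕ) :
    ((∑ k ∈ Finset.range (n + 1), (n.choose k : ℝ) * a (k + 1) * b (n - k))
      + ∑ k ∈ Finset.range (n + 1), (n.choose k : ℝ) * a k * b (n + 1 - k))
    = ∑ k ∈ Finset.range (n + 2), ((n + 1).choose k : ℝ) * a k * b (n + 1 - k) := by
  rw [Finset.sum_range_succ' (fun k => ((n + 1).choose k : ℝ) * a k * b (n + 1 - k))]
  have h1 : ∀ k ∈ Finset.range (n + 1),
      ((n + 1).choose (k + 1) : ℝ) * a (k + 1) * b (n + 1 - (k + 1))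
        = (n.choose k : ℝ) * a (k + 1) * b (n - k)
          + (n.choose (k + 1) : ℝ) * a (k + 1) * b (n - k) := by
    intro k _
    rw [Nat.succ_sub_succ, Nat.choose_succ_succ]
    push_cast
    ring
  rw [Finset.sum_congr rfl h1, Finset.sum_add_distrib]
  have h2 : ∑ k ∈ Finset.range (n + 1), (n.choose (k + 1) : ℝ) * a (k + 1) * b (n - k)
      + ((n + 1).choose 0 : ℝ) * a 0 * b (n + 1 - 0)
      = ∑ k ∈ Finset.range (n + 1), (n.choose k : ℝ) * a k * b (n + 1 - k) := by
    rw [Finset.sum_range_succ' (fun k => (n.choose k : ℝ) * a k * b (n + 1 - k)),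
      Finset.sum_range_succ]
    simp [Nat.choose_succ_self]
  ring_nf
  ring_nf at h2
  linarith [h2]

private lemma iterDeriv_leibniz {U : Set ℝ} (hU : IsOpen U) :
    ∀ (n : ℕ) (f g : ℝ → ℝ), ContDiffOn ℝ n f U → ContDiffOn ℝ n g U → ∀ t ∈ U,
    iteratedDeriv n (fun x => f x * g x) t =
      ∑ k ∈ Finset.range (n + 1),
        (n.choose k : ℝ) * iteratedDeriv k f t * iteratedDeriv (n - k) g t := by
  intro n
  induction n with
  | zero => intro f g _ _ t _; simp
  | succ n IH =>
    intro f g hf hg t ht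
    have hcast : (n : WithTop ℕ∞) + 1 ≤ ((n + 1 : ℕ) : WithTop ℕ∞) := by
      push_cast; exact le_rfl
    have hone : (1 : WithTop ℕ∞) ≤ ((n + 1 : ℕ) : WithTop ℕ∞) := by
      push_cast; exact le_add_self
    have hf' : ContDiffOn ℝ n (deriv f) U := hf.deriv_of_isOpen hU hcast
    have hg' : ContDiffOn ℝ n (deriv g) U := hg.deriv_of_isOpen hU hcast
    have hfd : ∀ x ∈ U, DifferentiableAt ℝ f x := fun x hx =>
      (hf.differentiableOn (by simp)).differentiableAt (hU.mem_nhds hx)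
    have hgd : ∀ x ∈ U, DifferentiableAt ℝ g x := fun x hx =>
      (hg.differentiableOn (by simp)).differentiableAt (hU.mem_nhds hx)
    have hev : (deriv fun x => f x * g x)
        =ᶠ[𝓝 t] fun x => deriv f x * g x + f x * deriv g x := by
      filter_upwards [hU.mem_nhds ht] with x hx
      exact deriv_mul (hfd x hx) (hgd x hx)
    rw [iteratedDeriv_succ', hev.iteratedDeriv_eq n,
      iterDeriv_add hU ht ((hf'.mul (hg.of_succ))) ((hf.of_succ).mul hg'),
      IH (deriv f) g hf' hg.of_succ t ht, IH f (deriv g) hf.of_succ hg' t ht]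
    have e1 : ∀ k, iteratedDeriv k (deriv f) t = iteratedDeriv (k + 1) f t := by
      intro k; rw [iteratedDeriv_succ']
    have e2 : ∀ k ∈ Finset.range (n + 1),
        (n.choose k : ℝ) * iteratedDeriv k f t * iteratedDeriv (n - k) (deriv g) t
          = (n.choose k : ℝ) * iteratedDeriv k f t * iteratedDeriv (n + 1 - k) g t := by
      intro k hk
      have h : n + 1 - k = (n - k) + 1 := by
        have := Finset.mem_range.mp hk; omega
      rw [h, iteratedDeriv_succ']
    simp only [e1]
    rw [Finset.sum_congr rfl e2]
    exact pascal_sum (fun k => iteratedDeriv k f t) (fun k => iteratedDeriv k g t) n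

private noncomputable def bell (x : ℕ → ℝ) : ℕ → ℝ
  | 0 => 1
  | n + 1 => ∑ k ∈ (Finset.range (n + 1)).attach,
      (n.choose k.1 : ℝ) * bell x k.1 * x (n - k.1 + 1)
  decreasing_by exact Finset.mem_range.mp k.2

private lemma bell_succ (x : ℕ → ℝ) (n : ℕ) :
    bell x (n + 1) = ∑ k ∈ Finset.range (n + 1),
      (n.choose k : ℝ) * bell x k * x (n - k + 1) := by
  rw [bell]
  exact Finset.sum_attach _ fun k => (n.choose k : ℝ) * bell x k * x (n - k + 1)

private lemma key_analytic {U : Set ℝ} (hU : IsOpen U) {g : ℝ → ℝ} {m : ℕ}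
    (hg : ContDiffOn ℝ m g U) :
    ∀ n, n ≤ m → ∀ t ∈ U, iteratedDeriv n (fun x => Real.exp (g x)) t =
      Real.exp (g t) * bell (fun j => iteratedDeriv j g t) n := by
  intro n
  induction n using Nat.strong_induction_on with
  | _ n IH =>
    match n with
    | 0 => intro _ t _; simp [bell]
    | n + 1 =>
      intro hnm t ht
      have hnm' : ((n + 1 : ℕ) : WithTop ℕ∞) ≤ (m : WithTop ℕ∞) := by
        exact_mod_cast hnm
      have hgn : ContDiffOn ℝ (n + 1 : ℕ) g U := hg.of_le hnm'
      have hone : (1 : WithTop ℕ∞) ≤ ((n + 1 : ℕ) : WithTop ℕ∞) := by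
        push_cast; exact le_add_self
      have hcast : (n : WithTop ℕ∞) + 1 ≤ ((n + 1 : ℕ) : WithTop ℕ∞) := by
        push_cast; exact le_rfl
      have hgd : ∀ x ∈ U, DifferentiableAt ℝ g x := fun x hx =>
        (hgn.differentiableOn (by simp)).differentiableAt (hU.mem_nhds hx)
      have hexp : ContDiffOn ℝ n (fun x => Real.exp (g x)) U :=
        (Real.contDiff_exp.comp_contDiffOn (hgn.of_succ))
      have hg' : ContDiffOn ℝ n (deriv g) U := hgn.deriv_of_isOpen hU hcast
      have hev : (deriv fun x => Real.exp (g x))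
          =ᶠ[𝓝 t] fun x => Real.exp (g x) * deriv g x := by
        filter_upwards [hU.mem_nhds ht] with x hx
        exact (HasDerivAt.comp x (Real.hasDerivAt_exp (g x)) (hgd x hx).hasDerivAt).deriv
      rw [iteratedDeriv_succ', hev.iteratedDeriv_eq n,
        iterDeriv_leibniz hU n _ _ hexp hg' t ht]
      rw [_root_.bell_succ, Finset.mul_sum]
      refine Finset.sum_congr rfl fun k hk => ?_
      have hkn : k ≤ n := Nat.lt_succ_iff.mp (Finset.mem_range.mp hk)
      rw [IH k (Nat.lt_succ_of_le hkn) (hkn.trans (Nat.le_of_succ_le hnm)) t ht]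
      have h2 : iteratedDeriv (n - k) (deriv g) t = iteratedDeriv (n - k + 1) g t := by
        rw [iteratedDeriv_succ']
      rw [h2]
      ring

private noncomputable def bterm (x : ℕ → ℝ) {N : ℕ} (m : ℕ) (b : Fin N → ℕ) : ℝ :=
  ((m ! : ℝ) / ∏ j, ((b j)! : ℝ)) * ∏ j, (x (j.1 + 1) / ((j.1 + 1)! : ℝ)) ^ (b j)

private def bset (N m r : ℕ) : Finset (Fin N → ℕ) :=
  (Fintype.piFinset fun _ : Fin N => Finset.range r).filter
    fun b => ∑ j, (j.1 + 1) * b j = m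

private lemma mem_bset {N m r : ℕ} (hr : m < r) (b : Fin N → ℕ) :
    b ∈ bset N m r ↔ ∑ j, (j.1 + 1) * b j = m := by
  constructor
  · exact fun h => (Finset.mem_filter.mp h).2
  · intro h
    refine Finset.mem_filter.mpr ⟨Fintype.mem_piFinset.mpr fun j => Finset.mem_range.mpr ?_, h⟩
    calc b j ≤ (j.1 + 1) * b j := Nat.le_mul_of_pos_left _ j.1.succ_pos
    _ ≤ ∑ i, (i.1 + 1) * b i :=
      Finset.single_le_sum (f := fun i : Fin N => (i.1 + 1) * b i)
        (fun i _ => Nat.zero_le _) (Finset.mem_univ j)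
    _ = m := h
    _ < r := hr

private noncomputable def Bsum (N m : ℕ) (x : ℕ → ℝ) : ℝ :=
  ∑ b ∈ bset N m (m + 1), bterm x m b

private lemma Bsum_zero (N : ℕ) (x : ℕ → ℝ) : Bsum N 0 x = 1 := by
  have h : bset N 0 1 = {fun _ => 0} := by
    ext b
    rw [mem_bset Nat.zero_lt_one, Finset.mem_singleton]
    constructor
    · intro h
      funext j
      have := Finset.sum_eq_zero_iff.mp h j (Finset.mem_univ j)
      simpa using this
    · intro h; subst h; simp
  rw [Bsum, h, Finset.sum_singleton]
  simp [bterm]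

private lemma weight_update {N : ℕ} (b : Fin N → ℕ) (j : Fin N) (v : ℕ) :
    ∑ i, (i.1 + 1) * (Function.update b j v) i + (j.1 + 1) * b j
      = ∑ i, (i.1 + 1) * b i + (j.1 + 1) * v := by
  have h1 : ∑ i, (i.1 + 1) * Function.update b j v i
      = (j.1 + 1) * v + ∑ i ∈ Finset.univ.erase j, (i.1 + 1) * b i := by
    rw [← Finset.add_sum_erase _ _ (Finset.mem_univ j), Function.update_self]
    congr 1
    exact Finset.sum_congr rfl fun i hi => by
      rw [Function.update_of_ne (Finset.mem_erase.mp hi).1]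
  have h2 : ∑ i, (i.1 + 1) * b i
      = (j.1 + 1) * b j + ∑ i ∈ Finset.univ.erase j, (i.1 + 1) * b i :=
    (Finset.add_sum_erase _ _ (Finset.mem_univ j)).symm
  omega

private lemma bterm_update {N n : ℕ} (x : ℕ → ℝ) (j : Fin N) (hj : j.1 ≤ n) (b : Fin N → ℕ) :
    (((j.1 + 1) * (b j + 1) : ℕ) : ℝ) / ((n : ℝ) + 1) *
        bterm x (n + 1) (Function.update b j (b j + 1))
      = (n.choose j.1 : ℝ) * x (j.1 + 1) * bterm x (n - j.1) b := by
  set E : ℝ := ∏ i ∈ Finset.univ.erase j, ((b i)! : ℝ) with hE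
  set Q : ℝ := ∏ i ∈ Finset.univ.erase j, (x (i.1 + 1) / ((i.1 + 1)! : ℝ)) ^ (b i) with hQ
  have hprod1 : ∏ i, (((Function.update b j (b j + 1)) i)! : ℝ) = ((b j + 1)! : ℝ) * E := by
    rw [← Finset.mul_prod_erase _ _ (Finset.mem_univ j), Function.update_self]
    congr 1
    exact Finset.prod_congr rfl fun i hi => by
      rw [Function.update_of_ne (Finset.mem_erase.mp hi).1]
  have hprod2 : ∏ i, ((b i)! : ℝ) = ((b j)! : ℝ) * E :=
    (Finset.mul_prod_erase _ _ (Finset.mem_univ j)).symm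
  have hpow1 : ∏ i, (x (i.1 + 1) / ((i.1 + 1)! : ℝ)) ^ ((Function.update b j (b j + 1)) i)
      = (x (j.1 + 1) / ((j.1 + 1)! : ℝ)) ^ (b j + 1) * Q := by
    rw [← Finset.mul_prod_erase _ _ (Finset.mem_univ j), Function.update_self]
    congr 1
    exact Finset.prod_congr rfl fun i hi => by
      rw [Function.update_of_ne (Finset.mem_erase.mp hi).1]
  have hpow2 : ∏ i, (x (i.1 + 1) / ((i.1 + 1)! : ℝ)) ^ (b i)
      = (x (j.1 + 1) / ((j.1 + 1)! : ℝ)) ^ (b j) * Q :=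
    (Finset.mul_prod_erase _ _ (Finset.mem_univ j)).symm
  have hfac1 : (((n + 1))! : ℝ)
      = ((n : ℝ) + 1) * ((n.choose j.1 : ℝ) * ((j.1)! : ℝ) * ((n - j.1)! : ℝ)) := by
    rw [Nat.factorial_succ, ← Nat.choose_mul_factorial_mul_factorial hj]
    push_cast
    ring
  have hfac2 : ((b j + 1)! : ℝ) = ((b j : ℝ) + 1) * ((b j)! : ℝ) := by
    rw [Nat.factorial_succ]; push_cast; ring
  have hF : (((j.1 + 1))! : ℝ) = ((j.1 : ℝ) + 1) * ((j.1)! : ℝ) := by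
    rw [Nat.factorial_succ]; push_cast; ring
  have hn1 : ((n : ℝ) + 1) ≠ 0 := by positivity
  have hbj1 : ((b j : ℝ) + 1) ≠ 0 := by positivity
  have hj1 : ((j.1 : ℝ) + 1) ≠ 0 := by positivity
  have hfbj : ((b j)! : ℝ) ≠ 0 := Nat.cast_ne_zero.mpr (Nat.factorial_ne_zero _)
  have hfj : ((j.1)! : ℝ) ≠ 0 := Nat.cast_ne_zero.mpr (Nat.factorial_ne_zero _)
  have hfnj : ((n - j.1)! : ℝ) ≠ 0 := Nat.cast_ne_zero.mpr (Nat.factorial_ne_zero _)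
  have hEne : E ≠ 0 := by
    rw [hE]
    exact Finset.prod_ne_zero_iff.mpr fun i _ =>
      Nat.cast_ne_zero.mpr (Nat.factorial_ne_zero _)
  simp only [bterm, hprod1, hprod2, hpow1, hpow2, hfac1, hfac2, hF, pow_succ]
  push_cast
  field_simp

private lemma inner_sum_eq {N n : ℕ} (x : ℕ → ℝ) (j : Fin N) (hj : j.1 ≤ n) :
    ∑ b ∈ bset N (n + 1) (n + 2),
        (((j.1 + 1) * b j : ℕ) : ℝ) / ((n : ℝ) + 1) * bterm x (n + 1) b
      = (n.choose j.1 : ℝ) * x (j.1 + 1) * Bsum N (n - j.1) x := by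
  rw [← Finset.sum_filter_of_ne (p := fun b => b j ≠ 0)
    (fun b _ hb => by
      intro h0
      apply hb
      rw [h0]
      simp)]
  rw [Bsum, Finset.mul_sum]
  refine (Finset.sum_nbij' (i := fun b => Function.update b j (b j + 1))
    (j := fun b => Function.update b j (b j - 1)) ?_ ?_ ?_ ?_ ?_).symm
  · -- maps into filtered set
    intro b hb
    have hw := (mem_bset (Nat.lt_succ_self _) b).mp hb
    have hwu := weight_update b j (b j + 1)
    have hmul : (j.1 + 1) * (b j + 1) = (j.1 + 1) * b j + (j.1 + 1) := by ring
    rw [hmul, hw] at hwu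
    refine Finset.mem_filter.mpr ⟨(mem_bset (Nat.lt_succ_self _) _).mpr ?_, ?_⟩
    · clear * - hwu hj
      beta_reduce
      omega
    · simp
  · -- inverse maps back
    intro b hb
    obtain ⟨hb1, hb2⟩ := Finset.mem_filter.mp hb
    have hw := (mem_bset (Nat.lt_succ_self _) b).mp hb1
    have hwu := weight_update b j (b j - 1)
    have hbj : b j = (b j - 1) + 1 := (Nat.succ_pred_eq_of_pos (Nat.pos_of_ne_zero hb2)).symm
    have hmul : (j.1 + 1) * b j = (j.1 + 1) * (b j - 1) + (j.1 + 1) := by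
      conv_lhs => rw [hbj]
      ring
    rw [hw] at hwu
    refine (mem_bset (Nat.lt_succ_self _) _).mpr ?_
    clear * - hwu hj hmul
    beta_reduce
    omega
  · intro b _
    funext i
    by_cases hi : i = j
    · subst hi; simp
    · simp [Function.update_of_ne hi]
  · intro b hb
    have hb2 := (Finset.mem_filter.mp hb).2
    funext i
    by_cases hi : i = j
    · subst hi
      simp only [Function.update_self]
      omega
    · simp [Function.update_of_ne hi]
  · intro b hb
    have := bterm_update x j hj b
    rw [← this]
    congr 2
    simp

private lemma inner_sum_zero {N n : ℕ} (x : ℕ → ℝ) (j : Fin N) (hj : n < j.1) :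
    ∑ b ∈ bset N (n + 1) (n + 2),
        (((j.1 + 1) * b j : ℕ) : ℝ) / ((n : ℝ) + 1) * bterm x (n + 1) b = 0 := by
  refine Finset.sum_eq_zero fun b hb => ?_
  have hw := (mem_bset (Nat.lt_succ_self _) b).mp hb
  have hle : (j.1 + 1) * b j ≤ n + 1 := by
    rw [← hw]
    exact Finset.single_le_sum (f := fun i : Fin N => (i.1 + 1) * b i)
      (fun i _ => Nat.zero_le _) (Finset.mem_univ j)
  have hbj : b j = 0 := by
    by_contra h
    have h2 : j.1 + 1 ≤ (j.1 + 1) * b j :=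
      Nat.le_mul_of_pos_right _ (Nat.pos_of_ne_zero h)
    omega
  rw [hbj]
  simp

private lemma Bsum_rec {N n : ℕ} (hN : n + 1 ≤ N) (x : ℕ → ℝ) :
    Bsum N (n + 1) x = ∑ k ∈ Finset.range (n + 1),
      (n.choose k : ℝ) * Bsum N k x * x (n - k + 1) := by
  have step1 : Bsum N (n + 1) x = ∑ b ∈ bset N (n + 1) (n + 2), ∑ j : Fin N,
      (((j.1 + 1) * b j : ℕ) : ℝ) / ((n : ℝ) + 1) * bterm x (n + 1) b := by
    rw [Bsum]
    refine Finset.sum_congr rfl fun b hb => ?_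
    have hw := (mem_bset (Nat.lt_succ_self _) b).mp hb
    have hsum : ∑ j : Fin N, (((j.1 + 1) * b j : ℕ) : ℝ) = (n : ℝ) + 1 := by
      rw [← Nat.cast_sum, hw]
      push_cast
      ring
    rw [← Finset.sum_mul, ← Finset.sum_div, hsum, div_self (by positivity), one_mul]
  rw [step1, Finset.sum_comm]
  have hfilter : ∑ j : Fin N, ∑ b ∈ bset N (n + 1) (n + 2),
      (((j.1 + 1) * b j : ℕ) : ℝ) / ((n : ℝ) + 1) * bterm x (n + 1) b
      = ∑ j ∈ Finset.univ.filter (fun j : Fin N => j.1 ≤ n), ∑ b ∈ bset N (n + 1) (n + 2),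
      (((j.1 + 1) * b j : ℕ) : ℝ) / ((n : ℝ) + 1) * bterm x (n + 1) b := by
    refine (Finset.sum_filter_of_ne fun j _ hne => ?_).symm
    by_contra h
    exact hne (inner_sum_zero x j (by omega))
  rw [hfilter]
  have hmain : ∑ j ∈ Finset.univ.filter (fun j : Fin N => j.1 ≤ n),
      ∑ b ∈ bset N (n + 1) (n + 2),
        (((j.1 + 1) * b j : ℕ) : ℝ) / ((n : ℝ) + 1) * bterm x (n + 1) b
      = ∑ k ∈ Finset.range (n + 1), (n.choose k : ℝ) * x (k + 1) * Bsum N (n - k) x := by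
    refine Finset.sum_nbij' (i := fun j => j.1)
      (j := fun k => (⟨min k n, by omega⟩ : Fin N))
      ?_ ?_ ?_ ?_ ?_
    · intro j hj
      exact Finset.mem_range.mpr (Nat.lt_succ_of_le (Finset.mem_filter.mp hj).2)
    · intro k hk
      exact Finset.mem_filter.mpr ⟨Finset.mem_univ _, min_le_right _ _⟩
    · intro j hj
      exact Fin.ext (by simp [Nat.min_eq_left (Finset.mem_filter.mp hj).2])
    · intro k hk
      simp [Nat.min_eq_left (Nat.lt_succ_iff.mp (Finset.mem_range.mp hk))]
    · intro j hj
      exact inner_sum_eq x j (Finset.mem_filter.mp hj).2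
  rw [hmain, ← Finset.sum_range_reflect]
  refine Finset.sum_congr rfl fun k hk => ?_
  have hk' : k ≤ n := Nat.lt_succ_iff.mp (Finset.mem_range.mp hk)
  have h1 : n + 1 - 1 - k = n - k := by omega
  rw [h1, Nat.choose_symm hk', Nat.sub_sub_self hk']
  ring

private lemma bell_eq_Bsum (N : ℕ) (x : ℕ → ℝ) : ∀ n, n ≤ N → bell x n = Bsum N n x := by
  intro n
  induction n using Nat.strong_induction_on with
  | _ n IH =>
    match n with
    | 0 => intro _; simp [bell, Bsum_zero]
    | n + 1 =>
      intro h
      rw [_root_.bell_succ, Bsum_rec h]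
      refine Finset.sum_congr rfl fun k hk => ?_
      have hk' : k ≤ n := Nat.lt_succ_iff.mp (Finset.mem_range.mp hk)
      rw [IH k (Nat.lt_succ_of_le hk') (by omega)]
end FaaDiBrunoExpAux

/-- Faà di Bruno's formula for the exponential of an `m`-times continuously
differentiable function `g` at a point `s`: the `m`-th derivative of `exp (g s)`
is `exp (g s)` times a sum over all tuples `(b₁,…,b_m)` with `∑ j·b_j = m`. -/
theorem faa_di_bruno_exp
    (g : ℝ → ℝ) (m : ℕ) (s : ℝ) (hg : ContDiffAt ℝ m g s) :
    iteratedDeriv m (fun t => Real.exp (g t)) s =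
      Real.exp (g s) *
        ∑ b ∈ (Fintype.piFinset fun _ : Fin m => Finset.range (m + 1)) |>.filter
            (fun b => ∑ j : Fin m, (j.1 + 1) * b j = m),
          ((m ! : ℝ) / ∏ j : Fin m, ((b j)! : ℝ)) *
            ∏ j : Fin m, (iteratedDeriv (j.1 + 1) g s / ((j.1 + 1)! : ℝ)) ^ (b j) := by
  obtain ⟨u, hu, hcd⟩ := hg.contDiffOn le_rfl (by simp)
  obtain ⟨U, hUu, hUopen, hsU⟩ := mem_nhds_iff.mp hu
  have h1 := key_analytic hUopen (hcd.mono hUu) m le_rfl s hsU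
  have h2 := bell_eq_Bsum m (fun j => iteratedDeriv j g s) m le_rfl
  rw [h1, h2]
  rfl
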